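/- For every d ∈ ℕ there exists c' > 0 such that Σ_{n=2}^∞ n^{d/2} e^{-α n²} ≤ c' α^{-(d+2)/4} e^{-α} uniformly for all α > 0. -/

import Mathlib

open MeasureTheory Set

set_option maxHeartbeats 1000000 in
/-- For every `d ∈ ℕ` there exists `c' > 0` such that
`Σ_{n=2}^∞ n^{d/2} e^{-α n²} ≤ c' α^{-(d+2)/4} e^{-α}` uniformly for all `α > 0`. -/
theorem sum_pow_mul_exp_neg_sq_le (d : ℕ) :
    ∃ c' > (0 : ℝ), ∀ α : ℝ, 0 < α →
      (∑' n : ℕ, ((n + 2 : ℝ) ^ ((d : ℝ) / 2) * Real.exp (-α * (n + 2) ^ 2)))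
        ≤ c' * α ^ (-((d : ℝ) + 2) / 4) * Real.exp (-α) := by
  set s : ℝ := (d : ℝ) / 2 with hsdef
  have hs0 : 0 ≤ s := by positivity
  have hs1 : (-1 : ℝ) < s := by linarith
  set q : ℝ := -((d : ℝ) + 2) / 4 with hqdef
  have hq : q = -(s + 1) / 2 := by rw [hqdef, hsdef]; ring
  have hI0 : 0 ≤ ∫ x in Ioi (0 : ℝ), x ^ s * Real.exp (-1 * x ^ 2) :=
    setIntegral_nonneg measurableSet_Ioi fun x hx => by
      have hx0 : (0:ℝ) < x := hx
      positivity
  refine ⟨(2 : ℝ) ^ s * 2 ^ (-q) * (∫ x in Ioi (0 : ℝ), x ^ s * Real.exp (-1 * x ^ 2)) + 1,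
    by positivity, fun α hα => ?_⟩
  have hαq : (0 : ℝ) < α ^ q := Real.rpow_pos_of_pos hα q
  have he : (0 : ℝ) < Real.exp (-α) := Real.exp_pos _
  set β : ℝ := α / 2 with hβdef
  have hβ : 0 < β := by positivity
  have hint : IntegrableOn (fun x : ℝ => x ^ s * Real.exp (-β * x ^ 2)) (Ioi 0) :=
    integrableOn_rpow_mul_exp_neg_mul_sq hβ hs1
  have hc : (0 : ℝ) < Real.sqrt β := Real.sqrt_pos.mpr hβ
  -- value of the full integral by scaling
  have hval : (∫ x in Ioi (0 : ℝ), x ^ s * Real.exp (-β * x ^ 2))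
      = β ^ (-(s + 1) / 2) * ∫ x in Ioi (0 : ℝ), x ^ s * Real.exp (-1 * x ^ 2) := by
    have h1 : (∫ x in Ioi (0:ℝ),
        (fun y : ℝ => y ^ s * Real.exp (-1 * y ^ 2)) (Real.sqrt β * x))
        = (Real.sqrt β)⁻¹ • ∫ x in Ioi (0 : ℝ), x ^ s * Real.exp (-1 * x ^ 2) := by
      have := MeasureTheory.integral_comp_mul_left_Ioi
        (fun y : ℝ => y ^ s * Real.exp (-1 * y ^ 2)) 0 hc
      rw [mul_zero] at this
      exact this
    have h3 : Real.sqrt β ^ s * (∫ x in Ioi (0 : ℝ), x ^ s * Real.exp (-β * x ^ 2))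
        = (Real.sqrt β)⁻¹ * ∫ x in Ioi (0 : ℝ), x ^ s * Real.exp (-1 * x ^ 2) := by
      rw [← MeasureTheory.integral_const_mul, ← smul_eq_mul, ← h1]
      refine setIntegral_congr_fun measurableSet_Ioi (fun x hx => ?_)
      have hx0 : (0:ℝ) < x := hx
      simp only [smul_eq_mul]
      rw [Real.mul_rpow hc.le hx0.le, mul_pow, Real.sq_sqrt hβ.le]
      ring
    have hne : Real.sqrt β ^ s ≠ 0 := (Real.rpow_pos_of_pos hc s).ne'
    have hpow : (Real.sqrt β ^ s)⁻¹ * (Real.sqrt β)⁻¹ = β ^ (-(s + 1) / 2) := by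
      rw [← Real.rpow_neg_one (Real.sqrt β), ← Real.rpow_neg hc.le,
        ← Real.rpow_add hc, Real.sqrt_eq_rpow, ← Real.rpow_mul hβ.le]
      ring_nf
    calc (∫ x in Ioi (0 : ℝ), x ^ s * Real.exp (-β * x ^ 2))
        = (Real.sqrt β ^ s)⁻¹
            * (Real.sqrt β ^ s * ∫ x in Ioi (0 : ℝ), x ^ s * Real.exp (-β * x ^ 2)) := by
          field_simp
      _ = (Real.sqrt β ^ s)⁻¹
            * ((Real.sqrt β)⁻¹ * ∫ x in Ioi (0 : ℝ), x ^ s * Real.exp (-1 * x ^ 2)) := by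
          rw [h3]
      _ = ((Real.sqrt β ^ s)⁻¹ * (Real.sqrt β)⁻¹)
            * ∫ x in Ioi (0 : ℝ), x ^ s * Real.exp (-1 * x ^ 2) := by ring
      _ = β ^ (-(s + 1) / 2) * ∫ x in Ioi (0 : ℝ), x ^ s * Real.exp (-1 * x ^ 2) := by
          rw [hpow]
  -- termwise bound
  have hterm : ∀ n : ℕ, ((n : ℝ) + 2) ^ s * Real.exp (-α * ((n : ℝ) + 2) ^ 2)
      ≤ Real.exp (-α) * (2 ^ s *
        ∫ x in Ioc ((n : ℝ) + 1) ((n : ℝ) + 2), x ^ s * Real.exp (-β * x ^ 2)) := by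
    intro n
    have hn0 : (0 : ℝ) ≤ (n : ℝ) := Nat.cast_nonneg n
    have hm0 : (0 : ℝ) < (n : ℝ) + 2 := by linarith
    have h1 : Real.exp (-α * ((n : ℝ) + 2) ^ 2)
        ≤ Real.exp (-α) * Real.exp (-β * ((n : ℝ) + 2) ^ 2) := by
      rw [← Real.exp_add]
      apply Real.exp_le_exp.mpr
      rw [hβdef]
      have hm4 : (4:ℝ) ≤ ((n : ℝ) + 2) ^ 2 := by nlinarith [hn0]
      nlinarith [mul_nonneg hα.le (by linarith : (0:ℝ) ≤ ((n : ℝ) + 2) ^ 2 - 2)]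
    have hsub : Ioc ((n : ℝ) + 1) ((n : ℝ) + 2) ⊆ Ioi (0 : ℝ) := fun x hx => by
      have := hx.1; simp only [mem_Ioi]; linarith
    have hconst : ∀ x ∈ Ioc ((n : ℝ) + 1) ((n : ℝ) + 2),
        (((n : ℝ) + 2) / 2) ^ s * Real.exp (-β * ((n : ℝ) + 2) ^ 2)
          ≤ x ^ s * Real.exp (-β * x ^ 2) := by
      intro x hx
      have hx1 : ((n : ℝ) + 2) / 2 ≤ x := by have := hx.1; linarith
      have hx0 : (0 : ℝ) < x := lt_of_lt_of_le (by linarith) hx1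
      have hrp : (((n : ℝ) + 2) / 2) ^ s ≤ x ^ s :=
        Real.rpow_le_rpow (by positivity) hx1 hs0
      have hexp : Real.exp (-β * ((n : ℝ) + 2) ^ 2) ≤ Real.exp (-β * x ^ 2) := by
        apply Real.exp_le_exp.mpr
        have hfac : 0 ≤ β * (((n : ℝ) + 2) - x) * (((n : ℝ) + 2) + x) :=
          mul_nonneg (mul_nonneg hβ.le (by linarith [hx.2])) (by linarith)
        nlinarith [hfac]
      exact mul_le_mul hrp hexp (Real.exp_pos _).le (by positivity)
    have hvol : volume (Ioc ((n : ℝ) + 1) ((n : ℝ) + 2)) ≠ ⊤ := measure_Ioc_lt_top.ne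
    have hge := setIntegral_ge_of_const_le measurableSet_Ioc hvol hconst
      (hint.mono_set hsub)
    have hvol1 : (volume (Ioc ((n : ℝ) + 1) ((n : ℝ) + 2))).toReal = 1 := by
      have e : ((n : ℝ) + 2) - ((n : ℝ) + 1) = 1 := by ring
      rw [Real.volume_Ioc, e]
      simp
    rw [measureReal_def, hvol1, one_smul] at hge
    have h2s : (2 : ℝ) ^ s * ((((n : ℝ) + 2) / 2) ^ s * Real.exp (-β * ((n : ℝ) + 2) ^ 2))
        = ((n : ℝ) + 2) ^ s * Real.exp (-β * ((n : ℝ) + 2) ^ 2) := by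
      rw [← mul_assoc, ← Real.mul_rpow (by norm_num) (by positivity)]
      congr 1
      ring
    calc ((n : ℝ) + 2) ^ s * Real.exp (-α * ((n : ℝ) + 2) ^ 2)
        ≤ ((n : ℝ) + 2) ^ s * (Real.exp (-α) * Real.exp (-β * ((n : ℝ) + 2) ^ 2)) :=
          mul_le_mul_of_nonneg_left h1 (by positivity)
      _ = Real.exp (-α) * ((2 : ℝ) ^ s
            * ((((n : ℝ) + 2) / 2) ^ s * Real.exp (-β * ((n : ℝ) + 2) ^ 2))) := by
          rw [h2s]; ring
      _ ≤ Real.exp (-α) * (2 ^ s *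
            ∫ x in Ioc ((n : ℝ) + 1) ((n : ℝ) + 2), x ^ s * Real.exp (-β * x ^ 2)) := by
          refine mul_le_mul_of_nonneg_left ?_ he.le
          exact mul_le_mul_of_nonneg_left hge (by positivity)
  -- finite sums are bounded
  have key : ∀ N : ℕ, ∑ n ∈ Finset.range N,
      (((n : ℝ) + 2) ^ s * Real.exp (-α * ((n : ℝ) + 2) ^ 2))
      ≤ Real.exp (-α) * (2 ^ s * (β ^ (-(s + 1) / 2)
          * ∫ x in Ioi (0 : ℝ), x ^ s * Real.exp (-1 * x ^ 2))) := by
    intro N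
    have hintk : ∀ k : ℕ, k < N → IntervalIntegrable
        (fun x : ℝ => x ^ s * Real.exp (-β * x ^ 2)) volume
        ((fun i : ℕ => (i : ℝ) + 1) k) ((fun i : ℕ => (i : ℝ) + 1) (k + 1)) := by
      intro k _
      rw [intervalIntegrable_iff]
      refine hint.mono_set ?_
      intro x hx
      rw [Set.uIoc_of_le (show ((fun i : ℕ => (i : ℝ) + 1) k) ≤ ((fun i : ℕ => (i : ℝ) + 1) (k + 1)) by push_cast; linarith)] at hx
      have h1 : (k : ℝ) + 1 < x := hx.1
      have h2 : (0:ℝ) ≤ (k:ℝ) := Nat.cast_nonneg k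
      simp only [mem_Ioi]
      linarith
    have hadj := intervalIntegral.sum_integral_adjacent_intervals
      (f := fun x : ℝ => x ^ s * Real.exp (-β * x ^ 2))
      (μ := volume) (a := fun i : ℕ => (i : ℝ) + 1) (n := N) hintk
    have hN0 : (0:ℝ) ≤ (N:ℝ) := Nat.cast_nonneg N
    have hsum : ∑ n ∈ Finset.range N,
        (∫ x in Ioc ((n : ℝ) + 1) ((n : ℝ) + 2), x ^ s * Real.exp (-β * x ^ 2))
        = ∫ x in Ioc (1 : ℝ) ((N : ℝ) + 1), x ^ s * Real.exp (-β * x ^ 2) := by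
      have e1 : ∀ k : ℕ,
          (∫ x in Ioc ((k : ℝ) + 1) ((k : ℝ) + 2), x ^ s * Real.exp (-β * x ^ 2))
          = ∫ x in ((fun i : ℕ => (i:ℝ)+1) k)..((fun i : ℕ => (i:ℝ)+1) (k+1)),
              x ^ s * Real.exp (-β * x ^ 2) := by
        intro k
        rw [intervalIntegral.integral_of_le
          (by push_cast; linarith [Nat.cast_nonneg (α := ℝ) k])]
        push_cast
        have e2 : (k : ℝ) + 1 + 1 = (k : ℝ) + 2 := by ring
        rw [e2]
      calc ∑ n ∈ Finset.range N,
            (∫ x in Ioc ((n : ℝ) + 1) ((n : ℝ) + 2), x ^ s * Real.exp (-β * x ^ 2))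
          = ∑ k ∈ Finset.range N,
              ∫ x in ((fun i : ℕ => (i:ℝ)+1) k)..((fun i : ℕ => (i:ℝ)+1) (k+1)),
                x ^ s * Real.exp (-β * x ^ 2) :=
            Finset.sum_congr rfl fun k _ => e1 k
        _ = ∫ x in ((fun i : ℕ => (i:ℝ)+1) 0)..((fun i : ℕ => (i:ℝ)+1) N),
              x ^ s * Real.exp (-β * x ^ 2) := hadj
        _ = ∫ x in Ioc (1 : ℝ) ((N : ℝ) + 1), x ^ s * Real.exp (-β * x ^ 2) := by
            simp only [Nat.cast_zero, zero_add]
            rw [intervalIntegral.integral_of_le (by linarith)]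
    have hmono : (∫ x in Ioc (1 : ℝ) ((N : ℝ) + 1), x ^ s * Real.exp (-β * x ^ 2))
        ≤ ∫ x in Ioi (0 : ℝ), x ^ s * Real.exp (-β * x ^ 2) := by
      refine setIntegral_mono_set hint ?_ ?_
      · refine (ae_restrict_iff' measurableSet_Ioi).mpr (ae_of_all _ fun x hx => ?_)
        have hx0 : (0:ℝ) < x := hx
        positivity
      · refine HasSubset.Subset.eventuallyLE fun x hx => ?_
        have := hx.1
        simp only [mem_Ioi]
        linarith
    calc ∑ n ∈ Finset.range N, (((n : ℝ) + 2) ^ s * Real.exp (-α * ((n : ℝ) + 2) ^ 2))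
        ≤ ∑ n ∈ Finset.range N, Real.exp (-α) * (2 ^ s *
            ∫ x in Ioc ((n : ℝ) + 1) ((n : ℝ) + 2), x ^ s * Real.exp (-β * x ^ 2)) :=
          Finset.sum_le_sum fun n _ => hterm n
      _ = Real.exp (-α) * (2 ^ s * ∑ n ∈ Finset.range N,
            ∫ x in Ioc ((n : ℝ) + 1) ((n : ℝ) + 2), x ^ s * Real.exp (-β * x ^ 2)) := by
          simp only [Finset.mul_sum]
      _ = Real.exp (-α) * (2 ^ s *
            ∫ x in Ioc (1 : ℝ) ((N : ℝ) + 1), x ^ s * Real.exp (-β * x ^ 2)) := by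
          rw [hsum]
      _ ≤ Real.exp (-α) * (2 ^ s *
            ∫ x in Ioi (0 : ℝ), x ^ s * Real.exp (-β * x ^ 2)) := by
          refine mul_le_mul_of_nonneg_left ?_ he.le
          refine mul_le_mul_of_nonneg_left hmono ?_
          positivity
      _ = Real.exp (-α) * (2 ^ s * (β ^ (-(s + 1) / 2)
            * ∫ x in Ioi (0 : ℝ), x ^ s * Real.exp (-1 * x ^ 2))) := by
          rw [hval]
  have htsum := Real.tsum_le_of_sum_range_le
    (f := fun n : ℕ => ((n : ℝ) + 2) ^ s * Real.exp (-α * ((n : ℝ) + 2) ^ 2))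
    (c := Real.exp (-α) * (2 ^ s * (β ^ (-(s + 1) / 2)
          * ∫ x in Ioi (0 : ℝ), x ^ s * Real.exp (-1 * x ^ 2))))
    (fun n => by positivity) key
  refine le_trans htsum ?_
  have hβq : β ^ (-(s + 1) / 2) = α ^ q * 2 ^ (-q) := by
    rw [← hq, hβdef, Real.div_rpow hα.le (by norm_num), Real.rpow_neg (by norm_num)]
    ring
  rw [hβq]
  nlinarith [mul_pos hαq he]
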